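/- Let S, T be planar star bodies with continuous positive radial functions, and α ∈ (0,2π). Then lim_{k→∞} (1/(2k²)) ∫_0^{2π} ρ_k(S,θ) ρ_k(T,θ+α) dθ = (1/π) Ã(S,B) Ã(T,B), where Ã(S,B) = (1/2)∫_0^{2π} ρ(S,θ) dθ and Ã(T,B) = (1/2)∫_0^{2π} ρ(T,θ) dθ. -/

import Mathlib

open Real Finset Filter
open intervalIntegral MeasureTheory


lemma sum_shift_aux {g : ℕ → ℝ} {k : ℕ} (hg : ∀ n, g (n + k) = g n) (m : ℕ) :
    ∑ n ∈ Finset.range k, g (n + m) = ∑ n ∈ Finset.range k, g n := by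
  induction m with
  | zero => simp
  | succ m ih =>
    have h1 : ∑ n ∈ Finset.range k, g (n + (m + 1)) = ∑ n ∈ Finset.range k, g ((n + 1) + m) := by
      apply Finset.sum_congr rfl; intro n _; ring_nf
    rw [h1, ← ih]
    rcases Nat.eq_zero_or_pos k with hk | hk
    · simp [hk]
    have h2 : ∑ n ∈ Finset.range k, g ((n + 1) + m)
        = (∑ n ∈ Finset.range (k + 1), g (n + m)) - g (0 + m) := by
      rw [Finset.sum_range_succ' (fun n => g (n + m)) k]
      ring
    rw [h2, Finset.sum_range_succ]
    have : g (k + m) = g (0 + m) := by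
      have := hg m
      simpa [Nat.add_comm] using this
    rw [this]; ring

lemma bounded_of_periodic {f : ℝ → ℝ} (hf : Continuous f) (hper : Function.Periodic f (2 * π)) :
    ∃ M : ℝ, 0 ≤ M ∧ ∀ x, |f x| ≤ M := by
  obtain ⟨M, hM⟩ := (isCompact_Icc (a := (0:ℝ)) (b := 2 * π)).exists_bound_of_continuousOn
    hf.continuousOn
  refine ⟨max M 0, le_max_right _ _, fun x => ?_⟩
  obtain ⟨y, hy, hxy⟩ := hper.exists_mem_Ico₀ Real.two_pi_pos x
  rw [hxy]
  exact le_trans (hM y ⟨hy.1, hy.2.le⟩) (le_max_left _ _)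


lemma riemann_tendsto (f : ℝ → ℝ) (hf : Continuous f) (hper : Function.Periodic f (2 * π))
    (a : ℝ) :
    Tendsto (fun k : ℕ => (1 / (k : ℝ)) * ∑ r ∈ Finset.range k, f (a + 2 * (r : ℝ) * π / k))
      atTop (nhds ((1 / (2 * π)) * ∫ θ in (0:ℝ)..(2 * π), f θ)) := by
  set I : ℝ := ∫ θ in (0:ℝ)..(2 * π), f θ with hIdef
  have hI : ∫ t in a..(a + 2 * π), f t = I := by
    have := hper.intervalIntegral_add_eq a 0
    simpa using this
  rw [Metric.tendsto_atTop]
  intro ε hε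
  -- uniform continuity on the compact interval [a, a + 2π]
  have hu : UniformContinuousOn f (Set.Icc a (a + 2 * π)) :=
    (isCompact_Icc).uniformContinuousOn_of_continuous hf.continuousOn
  obtain ⟨δ, hδ, hδ'⟩ := Metric.uniformContinuousOn_iff.mp hu (ε / 2) (by positivity)
  obtain ⟨N, hN⟩ := exists_nat_gt (2 * π / δ)
  have hNpos : (0:ℝ) < 2 * π / δ := by positivity
  refine ⟨N + 1, fun k hk => ?_⟩
  have hk1 : 1 ≤ k := le_trans (Nat.le_add_left 1 N) hk
  have hk0 : (0:ℝ) < (k : ℝ) := by exact_mod_cast hk1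
  have hkδ : 2 * π / (k : ℝ) < δ := by
    have hkN : 2 * π / δ < (k : ℝ) := lt_of_lt_of_le hN (by exact_mod_cast le_trans (Nat.le_succ N) hk)
    rw [div_lt_iff₀ hδ] at hkN
    rw [div_lt_iff₀ hk0]
    nlinarith
  set x : ℕ → ℝ := fun r => a + 2 * (r : ℝ) * π / k with hxdef
  have hxmono : ∀ r : ℕ, x r < x (r + 1) := by
    intro r
    simp only [hxdef]
    push_cast
    apply (add_lt_add_iff_left a).mpr
    rw [div_lt_div_iff₀ hk0 hk0]
    nlinarith [pi_pos]
  have hgap : ∀ r : ℕ, x (r + 1) - x r = 2 * π / k := by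
    intro r; simp only [hxdef]; push_cast; field_simp; ring
  have hmem : ∀ r : ℕ, r < k → Set.Icc (x r) (x (r + 1)) ⊆ Set.Icc a (a + 2 * π) := by
    intro r hr
    apply Set.Icc_subset_Icc
    · simp only [hxdef]; have : (0:ℝ) ≤ 2 * (r:ℝ) * π / k := by positivity
      linarith
    · simp only [hxdef]
      have hrk : ((r:ℝ) + 1) ≤ (k : ℝ) := by exact_mod_cast hr
      push_cast
      have h6 : 2 * ((r:ℝ) + 1) * π / k ≤ 2 * π := by
        rw [div_le_iff₀ hk0]
        nlinarith [pi_pos]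
      linarith
  -- splitting of the integral
  have hsplit : ∑ r ∈ Finset.range k, (∫ t in x r..x (r + 1), f t) = I := by
    rw [← hI]
    have := intervalIntegral.sum_integral_adjacent_intervals
      (a := x) (n := k) (μ := MeasureTheory.volume) (f := f)
      (fun i _ => (hf.intervalIntegrable _ _))
    rw [this]
    congr 1
    · simp [hxdef]
    · simp only [hxdef]; field_simp
  -- per-interval representation
  have h1 : ∀ r ∈ Finset.range k,
      (∫ t in x r..x (r + 1), (f (x r) - f t))
        = (2 * π / k) * f (x r) - ∫ t in x r..x (r + 1), f t := by
    intro r _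
    rw [intervalIntegral.integral_sub intervalIntegrable_const (hf.intervalIntegrable _ _),
      intervalIntegral.integral_const, hgap r, smul_eq_mul]
  have key : (1 / (k:ℝ)) * ∑ r ∈ Finset.range k, f (x r) - (1 / (2 * π)) * I
      = (1 / (2 * π)) * ∑ r ∈ Finset.range k, (∫ t in x r..x (r + 1), (f (x r) - f t)) := by
    rw [Finset.sum_congr rfl h1, Finset.sum_sub_distrib, hsplit, ← Finset.mul_sum]
    have hπ : (2 * π) ≠ 0 := by positivity
    field_simp
  -- bound each term
  have hbound : ∀ r ∈ Finset.range k,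
      |∫ t in x r..x (r + 1), (f (x r) - f t)| ≤ (ε / 2) * (2 * π / k) := by
    intro r hr
    have hr' := Finset.mem_range.mp hr
    have := intervalIntegral.norm_integral_le_of_norm_le_const
      (a := x r) (b := x (r + 1)) (C := ε / 2) (f := fun t => f (x r) - f t) ?_
    · rw [hgap r] at this
      rw [abs_of_pos (by positivity : (0:ℝ) < 2 * π / k)] at this
      simpa using this
    · intro t ht
      rw [Set.uIoc_of_le (hxmono r).le] at ht
      have htI : t ∈ Set.Icc a (a + 2 * π) := hmem r hr' ⟨ht.1.le, ht.2⟩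
      have hxI : x r ∈ Set.Icc a (a + 2 * π) := hmem r hr' ⟨le_refl _, (hxmono r).le⟩
      have hdist : dist (x r) t < δ := by
        rw [Real.dist_eq, abs_sub_comm, abs_of_pos (sub_pos.mpr ht.1)]
        have h7 := ht.2
        have h8 := hgap r
        exact lt_of_le_of_lt (by rw [← h8]; linarith) hkδ
      have := hδ' (x r) hxI t htI hdist
      rw [Real.dist_eq] at this
      simpa using this.le
  -- conclude
  rw [Real.dist_eq]
  have : |(1 / (k:ℝ)) * ∑ r ∈ Finset.range k, f (x r) - (1 / (2 * π)) * I| ≤ ε / 2 := by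
    rw [key, abs_mul]
    have h2 : |∑ r ∈ Finset.range k, (∫ t in x r..x (r + 1), (f (x r) - f t))|
        ≤ ∑ r ∈ Finset.range k, |∫ t in x r..x (r + 1), (f (x r) - f t)| :=
      Finset.abs_sum_le_sum_abs _ _
    have h3 : ∑ r ∈ Finset.range k, |∫ t in x r..x (r + 1), (f (x r) - f t)|
        ≤ ∑ r ∈ Finset.range k, (ε / 2) * (2 * π / k) := Finset.sum_le_sum hbound
    have h4 : ∑ r ∈ Finset.range k, (ε / 2) * (2 * π / k) = (ε / 2) * (2 * π) := by
      rw [Finset.sum_const, Finset.card_range, nsmul_eq_mul]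
      field_simp
    have h5 : |1 / (2 * π)| = 1 / (2 * π) := abs_of_pos (by positivity)
    rw [h5]
    calc (1 / (2 * π)) * |∑ r ∈ Finset.range k, (∫ t in x r..x (r + 1), (f (x r) - f t))|
        ≤ (1 / (2 * π)) * ((ε / 2) * (2 * π)) := by
          apply mul_le_mul_of_nonneg_left (le_trans h2 (le_trans h3 (le_of_eq h4)))
          positivity
      _ = ε / 2 := by field_simp
  calc |(1 / (k:ℝ)) * ∑ r ∈ Finset.range k, f (a + 2 * (r:ℝ) * π / k) - (1 / (2 * π)) * I|
      = |(1 / (k:ℝ)) * ∑ r ∈ Finset.range k, f (x r) - (1 / (2 * π)) * I| := rfl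
    _ ≤ ε / 2 := this
    _ < ε := by linarith

set_option maxHeartbeats 1000000 in
theorem korder_mixed_integral_limit (ρS ρT : ℝ → ℝ)
    (hρS : Continuous ρS) (hposS : ∀ θ, 0 < ρS θ) (hperS : ∀ θ, ρS (θ + 2 * π) = ρS θ)
    (hρT : Continuous ρT) (hposT : ∀ θ, 0 < ρT θ) (hperT : ∀ θ, ρT (θ + 2 * π) = ρT θ)
    (α : ℝ) (hα : α ∈ Set.Ioo 0 (2 * π)) :
    Tendsto (fun k : ℕ =>
        (1 / (2 * (k : ℝ) ^ 2)) *
          ∫ θ in (0:ℝ)..(2 * π),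
            (∑ m ∈ Finset.range k, ρS (θ + 2 * (m:ℝ) * π / k)) *
            (∑ m ∈ Finset.range k, ρT (θ + α + 2 * (m:ℝ) * π / k)))
      atTop
      (nhds ((1 / π) * (((1 / 2) * ∫ θ in (0:ℝ)..(2 * π), ρS θ) *
                        ((1 / 2) * ∫ θ in (0:ℝ)..(2 * π), ρT θ)))) := by

  obtain ⟨M, hM0, hM⟩ := bounded_of_periodic hρT hperT
  set IS : ℝ := ∫ θ in (0:ℝ)..(2 * π), ρS θ with hISdef
  set IT : ℝ := ∫ θ in (0:ℝ)..(2 * π), ρT θ with hITdef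
  set A : ℕ → ℝ → ℝ :=
    fun k θ => (1 / (k:ℝ)) * ∑ r ∈ Finset.range k, ρT (θ + α + 2 * (r:ℝ) * π / k) with hAdef
  have hAcont : ∀ k, Continuous (A k) := by
    intro k
    apply continuous_const.mul
    apply continuous_finset_sum
    intro r _
    exact hρT.comp (by fun_prop)
  have hAbd : ∀ k θ, |A k θ| ≤ M := by
    intro k θ
    rcases Nat.eq_zero_or_pos k with hk | hk
    · simp [hAdef, hk, hM0]
    have hk0 : (0:ℝ) < (k:ℝ) := by exact_mod_cast hk
    simp only [hAdef]
    rw [abs_mul, abs_of_pos (by positivity : (0:ℝ) < 1 / (k:ℝ))]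
    have h1 : |∑ r ∈ Finset.range k, ρT (θ + α + 2 * (r:ℝ) * π / k)| ≤ (k:ℝ) * M := by
      calc |∑ r ∈ Finset.range k, ρT (θ + α + 2 * (r:ℝ) * π / k)|
          ≤ ∑ r ∈ Finset.range k, |ρT (θ + α + 2 * (r:ℝ) * π / k)| :=
            Finset.abs_sum_le_sum_abs _ _
        _ ≤ ∑ r ∈ Finset.range k, M := Finset.sum_le_sum (fun r _ => hM _)
        _ = (k:ℝ) * M := by rw [Finset.sum_const, Finset.card_range, nsmul_eq_mul]
    calc 1 / (k:ℝ) * |∑ r ∈ Finset.range k, ρT (θ + α + 2 * (r:ℝ) * π / k)|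
        ≤ 1 / (k:ℝ) * ((k:ℝ) * M) := by
          apply mul_le_mul_of_nonneg_left h1 (by positivity)
      _ = M := by field_simp
  -- dominated convergence
  have hDCT : Tendsto (fun k => ∫ θ in (0:ℝ)..(2 * π), ρS θ * A k θ) atTop
      (nhds (∫ θ in (0:ℝ)..(2 * π), ρS θ * ((1 / (2 * π)) * IT))) := by
    apply intervalIntegral.tendsto_integral_filter_of_dominated_convergence
      (bound := fun θ => |ρS θ| * M)
    · filter_upwards with k
      exact ((hρS.mul (hAcont k)).aestronglyMeasurable).restrict
    · filter_upwards with k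
      filter_upwards with θ _
      rw [Real.norm_eq_abs, abs_mul]
      exact mul_le_mul_of_nonneg_left (hAbd k θ) (abs_nonneg _)
    · exact ((hρS.abs.mul continuous_const).intervalIntegrable _ _)
    · filter_upwards with θ _
      exact (riemann_tendsto ρT hρT hperT (θ + α)).const_mul (ρS θ)
  -- eventual identity
  have heq : ∀ᶠ k : ℕ in atTop,
      (1 / (2 * (k : ℝ) ^ 2)) *
          ∫ θ in (0:ℝ)..(2 * π),
            (∑ m ∈ Finset.range k, ρS (θ + 2 * (m:ℝ) * π / k)) *
            (∑ m ∈ Finset.range k, ρT (θ + α + 2 * (m:ℝ) * π / k))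
        = (1 / 2) * ∫ θ in (0:ℝ)..(2 * π), ρS θ * A k θ := by
    filter_upwards [eventually_ge_atTop 1] with k hk1
    have hk0 : ((k:ℝ)) ≠ 0 := by positivity
    set G : ℝ → ℝ := fun c => ∫ θ in (0:ℝ)..(2 * π), ρS θ * ρT (θ + c) with hGdef
    have hGper : ∀ c, G (c + 2 * π) = G c := by
      intro c
      apply intervalIntegral.integral_congr
      intro θ _
      simp only
      rw [show θ + (c + 2 * π) = (θ + c) + 2 * π by ring, hperT]
    -- each shifted integral equals a value of G
    have hshift : ∀ u v : ℝ,
        (∫ θ in (0:ℝ)..(2 * π), ρS (θ + u) * ρT (θ + α + v)) = G (α + v - u) := by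
      intro u v
      set h : ℝ → ℝ := fun s => ρS s * ρT (s + (α + v - u)) with hhdef
      have hh : Function.Periodic h (2 * π) := by
        intro s
        simp only [hhdef]
        rw [hperS, show s + 2 * π + (α + v - u) = (s + (α + v - u)) + 2 * π by ring, hperT]
      have e1 : (∫ θ in (0:ℝ)..(2 * π), ρS (θ + u) * ρT (θ + α + v))
          = ∫ θ in (0:ℝ)..(2 * π), h (θ + u) := by
        apply intervalIntegral.integral_congr
        intro θ _
        simp only [hhdef]
        rw [show θ + u + (α + v - u) = θ + α + v by ring]
      rw [e1, intervalIntegral.integral_comp_add_right h u]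
      have e2 : (∫ x in ((0:ℝ) + u)..(2 * π + u), h x) = ∫ x in u..(u + 2 * π), h x := by
        rw [zero_add, add_comm (2 * π) u]
      rw [e2, hh.intervalIntegral_add_eq u 0, zero_add]
    -- expand the product of sums
    have hintg : ∀ u v : ℝ,
        IntervalIntegrable (fun θ => ρS (θ + u) * ρT (θ + α + v)) volume 0 (2 * π) :=
      fun u v => ((hρS.comp (by fun_prop)).mul (hρT.comp (by fun_prop))).intervalIntegrable _ _
    have hprod : (∫ θ in (0:ℝ)..(2 * π),
            (∑ m ∈ Finset.range k, ρS (θ + 2 * (m:ℝ) * π / k)) *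
            (∑ m ∈ Finset.range k, ρT (θ + α + 2 * (m:ℝ) * π / k)))
        = ∑ m ∈ Finset.range k, ∑ n ∈ Finset.range k,
            ∫ θ in (0:ℝ)..(2 * π), ρS (θ + 2 * (m:ℝ) * π / k) * ρT (θ + α + 2 * (n:ℝ) * π / k) := by
      have e0 : (∫ θ in (0:ℝ)..(2 * π),
            (∑ m ∈ Finset.range k, ρS (θ + 2 * (m:ℝ) * π / k)) *
            (∑ m ∈ Finset.range k, ρT (θ + α + 2 * (m:ℝ) * π / k)))
          = ∫ θ in (0:ℝ)..(2 * π), ∑ m ∈ Finset.range k, ∑ n ∈ Finset.range k,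
              ρS (θ + 2 * (m:ℝ) * π / k) * ρT (θ + α + 2 * (n:ℝ) * π / k) :=
        intervalIntegral.integral_congr (fun θ _ => Finset.sum_mul_sum _ _ _ _)
      have e1 : (∫ θ in (0:ℝ)..(2 * π), ∑ m ∈ Finset.range k, ∑ n ∈ Finset.range k,
              ρS (θ + 2 * (m:ℝ) * π / k) * ρT (θ + α + 2 * (n:ℝ) * π / k))
          = ∑ m ∈ Finset.range k, ∫ θ in (0:ℝ)..(2 * π), ∑ n ∈ Finset.range k,
              ρS (θ + 2 * (m:ℝ) * π / k) * ρT (θ + α + 2 * (n:ℝ) * π / k) :=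
        intervalIntegral.integral_finset_sum (fun m _ =>
          (continuous_finset_sum _ fun n _ =>
            ((hρS.comp (by fun_prop)).mul (hρT.comp (by fun_prop)))).intervalIntegrable _ _)
      rw [e0, e1]
      exact Finset.sum_congr rfl fun m _ =>
        intervalIntegral.integral_finset_sum (fun n _ => hintg _ _)
    have hterm : ∀ m n : ℕ,
        (∫ θ in (0:ℝ)..(2 * π), ρS (θ + 2 * (m:ℝ) * π / k) * ρT (θ + α + 2 * (n:ℝ) * π / k))
          = G (α + 2 * (n:ℝ) * π / k - 2 * (m:ℝ) * π / k) := by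
      intro m n
      rw [hshift (2 * (m:ℝ) * π / k) (2 * (n:ℝ) * π / k)]
    -- collapse the double sum
    have hsum : ∑ m ∈ Finset.range k, ∑ n ∈ Finset.range k,
          G (α + 2 * (n:ℝ) * π / k - 2 * (m:ℝ) * π / k)
        = (k:ℝ) * ∑ r ∈ Finset.range k, G (α + 2 * (r:ℝ) * π / k) := by
      have hrow : ∀ m ∈ Finset.range k,
          (∑ n ∈ Finset.range k, G (α + 2 * (n:ℝ) * π / k - 2 * (m:ℝ) * π / k))
            = ∑ r ∈ Finset.range k, G (α + 2 * (r:ℝ) * π / k) := by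
        intro m _
        set g : ℕ → ℝ := fun n => G (α + 2 * (n:ℝ) * π / k - 2 * (m:ℝ) * π / k) with hgdef
        have hgper : ∀ n, g (n + k) = g n := by
          intro n
          simp only [hgdef]
          push_cast
          rw [show α + 2 * ((n:ℝ) + k) * π / k - 2 * (m:ℝ) * π / k
              = (α + 2 * (n:ℝ) * π / k - 2 * (m:ℝ) * π / k) + 2 * π by field_simp; ring]
          exact hGper _
        calc ∑ n ∈ Finset.range k, g n = ∑ n ∈ Finset.range k, g (n + m) :=
              (sum_shift_aux hgper m).symm
          _ = ∑ r ∈ Finset.range k, G (α + 2 * (r:ℝ) * π / k) := by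
              apply Finset.sum_congr rfl
              intro n _
              simp only [hgdef]
              congr 1
              push_cast
              field_simp
              ring
      rw [Finset.sum_congr rfl hrow, Finset.sum_const, Finset.card_range, nsmul_eq_mul]
    -- back to an integral
    have hback : ∑ r ∈ Finset.range k, G (α + 2 * (r:ℝ) * π / k)
        = ∫ θ in (0:ℝ)..(2 * π),
            ρS θ * ∑ r ∈ Finset.range k, ρT (θ + α + 2 * (r:ℝ) * π / k) := by
      simp only [hGdef]
      have e2 : (∫ θ in (0:ℝ)..(2 * π), ∑ r ∈ Finset.range k,
              ρS θ * ρT (θ + (α + 2 * (r:ℝ) * π / k)))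
          = ∑ r ∈ Finset.range k, ∫ θ in (0:ℝ)..(2 * π),
              ρS θ * ρT (θ + (α + 2 * (r:ℝ) * π / k)) :=
        intervalIntegral.integral_finset_sum (fun r _ =>
          ((by fun_prop : Continuous fun θ =>
            ρS θ * ρT (θ + (α + 2 * (r:ℝ) * π / k)))).intervalIntegrable _ _)
      rw [← e2]
      apply intervalIntegral.integral_congr
      intro θ _
      beta_reduce
      rw [Finset.mul_sum]
      apply Finset.sum_congr rfl
      intro r _
      rw [show θ + (α + 2 * (r:ℝ) * π / k) = θ + α + 2 * (r:ℝ) * π / k by ring]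
    -- put everything together
    rw [hprod]
    rw [Finset.sum_congr rfl (fun m _ => Finset.sum_congr rfl (fun n _ => hterm m n))]
    rw [hsum, hback]
    have hpull : (∫ θ in (0:ℝ)..(2 * π), ρS θ * A k θ)
        = (1 / (k:ℝ)) * ∫ θ in (0:ℝ)..(2 * π),
            ρS θ * ∑ r ∈ Finset.range k, ρT (θ + α + 2 * (r:ℝ) * π / k) := by
      rw [← intervalIntegral.integral_const_mul]
      apply intervalIntegral.integral_congr
      intro θ _
      simp only [hAdef]
      ring
    rw [hpull]
    generalize (∫ θ in (0:ℝ)..(2 * π), ρS θ * ∑ r ∈ Finset.range k, ρT (θ + α + 2 * (r:ℝ) * π / k)) = X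
    field_simp
  -- combine
  have hfinal : Tendsto (fun k : ℕ => (1 / 2) * ∫ θ in (0:ℝ)..(2 * π), ρS θ * A k θ) atTop
      (nhds ((1 / 2) * ∫ θ in (0:ℝ)..(2 * π), ρS θ * ((1 / (2 * π)) * IT))) :=
    hDCT.const_mul _
  have hval : (1 / 2) * (∫ θ in (0:ℝ)..(2 * π), ρS θ * ((1 / (2 * π)) * IT))
      = (1 / π) * (((1 / 2) * IS) * ((1 / 2) * IT)) := by
    rw [intervalIntegral.integral_mul_const, ← hISdef]
    have hπ : π ≠ 0 := Real.pi_ne_zero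
    field_simp
    try ring
    try exact Or.inl trivial
  rw [hval] at hfinal
  exact hfinal.congr' (Filter.EventuallyEq.symm heq)
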